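/- Every finite simple graph that is contractible in itself has Euler characteristic equal to 1. -/

import Mathlib

noncomputable def cfilter {V : Type*} (p : V → Prop) (s : Finset V) : Finset V :=
  @Finset.filter _ p (Classical.decPred p) s

lemma cfilter_card_lt {V : Type*} {p : V → Prop} {s : Finset V} {x : V} (hx : x ∈ s)
    (hpx : ¬ p x) : (cfilter p s).card < s.card := by
  classical
  refine Finset.card_lt_card ?_
  unfold cfilter
  rw [Finset.filter_congr_decidable]
  exact (Finset.ssubset_iff_of_subset (Finset.filter_subset _ _)).mpr
    ⟨x, hx, fun h => hpx (Finset.mem_filter.mp h).2⟩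

/-- Ivashchenko contractibility (in itself) of the subgraph of `G` induced on the finite
vertex set `s`: either `s` is a single vertex, or there is an injective function `f` on `s`
such that for every non-minimal vertex `x` the down-sphere `S⁻_f(x)` (the neighbours of `x`
in `s` with smaller `f`-value) is contractible in itself. -/
def Contractible {V : Type*} (G : SimpleGraph V) (s : Finset V) : Prop :=
  s.card = 1 ∨ (1 < s.card ∧ ∃ f : V → ℝ, Set.InjOn f ↑s ∧
    ∀ x ∈ s, (∃ y ∈ s, f y < f x) →
      Contractible G (cfilter (fun y => G.Adj x y ∧ f y < f x) s))
termination_by s.card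
decreasing_by
  rename_i hx hlt
  exact cfilter_card_lt hx (fun h => G.irrefl h.1)

/-- Euler characteristic of the subgraph of `G` induced on the finite vertex set `s`:
the alternating sum `Σ_k (-1)^k v_k`, where `v_k` is the number of `(k+1)`-cliques of `G`
contained in `s`. -/
noncomputable def echar {V : Type*} (G : SimpleGraph V) (s : Finset V) : ℤ :=
  ∑ k ∈ Finset.range (s.card + 1),
    (-1 : ℤ) ^ k *
      (Nat.card {t : Finset V // t ⊆ s ∧ t.card = k + 1 ∧ G.IsClique (t : Set V)} : ℤ)

lemma mem_cfilter {V : Type*} {p : V → Prop} {s : Finset V} {x : V} :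
    x ∈ cfilter p s ↔ x ∈ s ∧ p x := by
  classical
  unfold cfilter
  rw [Finset.filter_congr_decidable, Finset.mem_filter]

noncomputable def cliqueCount {V : Type*} (G : SimpleGraph V) (s : Finset V) (k : ℕ) : ℕ :=
  (@Finset.filter _ (fun t : Finset V => t.card = k ∧ G.IsClique (t : Set V))
    (Classical.decPred _) s.powerset).card

lemma mem_ccSet {V : Type*} {G : SimpleGraph V} {s t : Finset V} {k : ℕ} :
    t ∈ (@Finset.filter _ (fun t : Finset V => t.card = k ∧ G.IsClique (t : Set V))
      (Classical.decPred _) s.powerset) ↔ t ⊆ s ∧ t.card = k ∧ G.IsClique (t : Set V) := by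
  classical
  rw [Finset.filter_congr_decidable, Finset.mem_filter, Finset.mem_powerset]

lemma natCard_eq_cliqueCount {V : Type*} (G : SimpleGraph V) (s : Finset V) (k : ℕ) :
    Nat.card {t : Finset V // t ⊆ s ∧ t.card = k ∧ G.IsClique (t : Set V)}
      = cliqueCount G s k := by
  classical
  rw [cliqueCount, ← Fintype.card_coe, ← Nat.card_eq_fintype_card]
  exact Nat.card_congr (Equiv.subtypeEquivRight (fun t => mem_ccSet.symm))

lemma cliqueCount_eq_zero {V : Type*} (G : SimpleGraph V) {s : Finset V} {k : ℕ}
    (hk : s.card < k) : cliqueCount G s k = 0 := by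
  classical
  rw [cliqueCount, Finset.card_eq_zero, Finset.eq_empty_iff_forall_notMem]
  intro t ht
  obtain ⟨h1, h2, -⟩ := mem_ccSet.mp ht
  have := Finset.card_le_card h1
  omega

lemma cliqueCount_zero {V : Type*} (G : SimpleGraph V) (s : Finset V) :
    cliqueCount G s 0 = 1 := by
  classical
  rw [cliqueCount]
  rw [show (@Finset.filter _ (fun t : Finset V => t.card = 0 ∧ G.IsClique (t : Set V))
    (Classical.decPred _) s.powerset) = {(∅ : Finset V)} from ?_, Finset.card_singleton]
  ext t
  rw [mem_ccSet, Finset.mem_singleton]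
  constructor
  · rintro ⟨-, h, -⟩; exact Finset.card_eq_zero.mp h
  · rintro rfl; simp


lemma echar_eq_sum {V : Type*} (G : SimpleGraph V) (s : Finset V) {n : ℕ} (hn : s.card ≤ n) :
    echar G s = ∑ k ∈ Finset.range (n + 1), (-1 : ℤ) ^ k * (cliqueCount G s (k + 1) : ℤ) := by
  rw [echar]
  simp_rw [natCard_eq_cliqueCount]
  refine Finset.sum_subset (by intro k hk; simp at *; omega) ?_
  intro k _ hk
  rw [Finset.mem_range, not_lt] at hk
  rw [cliqueCount_eq_zero G (by omega)]
  ring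

lemma cliqueCount_key {V : Type*} (G : SimpleGraph V) [DecidableEq (Finset V)]
    [∀ t : Finset V, Decidable (G.IsClique (t : Set V))] (u : Finset V) (m : ℕ) :
    cliqueCount G u m =
      (u.powerset.filter (fun t : Finset V => t.card = m ∧ G.IsClique (t : Set V))).card := by
  rw [cliqueCount, Finset.filter_congr_decidable]

lemma cliqueCount_split {V : Type*} [DecidableEq V] (G : SimpleGraph V) {s D : Finset V} {x : V}
    (hx : x ∈ s) (hD : ∀ y, y ∈ D ↔ y ∈ s ∧ G.Adj x y) (k : ℕ) :
    cliqueCount G s (k + 1) = cliqueCount G (s.erase x) (k + 1) + cliqueCount G D k := by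
  classical
  have hxD : x ∉ D := fun h => G.irrefl ((hD x).mp h).2
  rw [cliqueCount_key, cliqueCount_key, cliqueCount_key]
  set S := s.powerset.filter (fun t : Finset V => t.card = k + 1 ∧ G.IsClique (t : Set V))
    with hS
  have hsplit := Finset.card_filter_add_card_filter_not
    (s := S) (p := fun t : Finset V => x ∈ t)
  have h1 : S.filter (fun t : Finset V => ¬ x ∈ t)
      = (s.erase x).powerset.filter
        (fun t : Finset V => t.card = k + 1 ∧ G.IsClique (t : Set V)) := by
    ext t
    simp only [hS, Finset.mem_filter, Finset.mem_powerset, Finset.subset_erase]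
    tauto
  have h2 : (S.filter (fun t : Finset V => x ∈ t)).card
      = (D.powerset.filter (fun t : Finset V => t.card = k ∧ G.IsClique (t : Set V))).card := by
    refine Finset.card_bij' (fun t _ => t.erase x) (fun t _ => insert x t) ?_ ?_ ?_ ?_
    · intro t ht
      simp only [hS, Finset.mem_filter, Finset.mem_powerset] at ht
      obtain ⟨⟨hts, htc, htq⟩, hxt⟩ := ht
      simp only [Finset.mem_filter, Finset.mem_powerset]
      refine ⟨?_, ?_, htq.subset (by exact_mod_cast Finset.erase_subset x t)⟩
      · intro y hy
        rw [Finset.mem_erase] at hy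
        exact (hD y).mpr ⟨hts hy.2, htq (by exact_mod_cast hxt) (by exact_mod_cast hy.2)
          (Ne.symm hy.1)⟩
      · rw [Finset.card_erase_of_mem hxt, htc]
        omega
    · intro t ht
      simp only [Finset.mem_filter, Finset.mem_powerset] at ht
      obtain ⟨htD, htc, htq⟩ := ht
      have hxt : x ∉ t := fun h => hxD (htD h)
      simp only [hS, Finset.mem_filter, Finset.mem_powerset]
      refine ⟨⟨Finset.insert_subset hx (fun y hy => ((hD y).mp (htD hy)).1), ?_, ?_⟩,
        Finset.mem_insert_self x t⟩
      · rw [Finset.card_insert_of_notMem hxt, htc]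
      · rw [Finset.coe_insert]
        exact htq.insert (fun b hb _ => ((hD b).mp (htD hb)).2)
    · intro t ht
      simp only [Finset.mem_filter] at ht
      exact Finset.insert_erase ht.2
    · intro t ht
      simp only [Finset.mem_filter, Finset.mem_powerset] at ht
      exact Finset.erase_insert (fun h => hxD (ht.1 h))
  rw [h1] at hsplit
  omega

lemma cliqueCount_singleton {V : Type*} (G : SimpleGraph V) (a : V) :
    cliqueCount G {a} 1 = 1 := by
  classical
  rw [cliqueCount_key]
  rw [show Finset.filter (fun t : Finset V => t.card = 1 ∧ G.IsClique (t : Set V))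
      ({a} : Finset V).powerset = {({a} : Finset V)} from ?_, Finset.card_singleton]
  ext t
  simp only [Finset.mem_filter, Finset.mem_powerset, Finset.mem_singleton,
    Finset.subset_singleton_iff]
  constructor
  · rintro ⟨(rfl | rfl), h2, h3⟩
    · simp at h2
    · rfl
  · rintro rfl
    refine ⟨Or.inr rfl, Finset.card_singleton a, ?_⟩
    rw [Finset.coe_singleton]
    exact G.isClique_singleton a

lemma echar_of_contractible {V : Type*} (G : SimpleGraph V) :
    ∀ n (s : Finset V), s.card ≤ n → Contractible G s → echar G s = 1 := by
  intro n
  induction n with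
  | zero =>
    intro s hs hc
    rw [Contractible] at hc
    rcases hc with h | ⟨h, -⟩ <;> omega
  | succ n ih =>
    classical
    intro s hs hc
    rw [Contractible] at hc
    rcases hc with h1 | ⟨hcard, f, hinj, hf⟩
    · -- base case : a single vertex
      obtain ⟨a, rfl⟩ := Finset.card_eq_one.mp h1
      rw [echar_eq_sum G _ (le_of_eq (Finset.card_singleton a))]
      rw [Finset.sum_range_succ, Finset.sum_range_one]
      rw [cliqueCount_singleton, cliqueCount_eq_zero G (by simp)]
      norm_num
    · -- inductive step
      obtain ⟨x, hx, hmax⟩ := Finset.exists_max_image s f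
        (Finset.card_pos.mp (by omega))
      have hstrict : ∀ y ∈ s, y ≠ x → f y < f x := fun y hy hne =>
        lt_of_le_of_ne (hmax y hy) (fun h => hne (hinj hy hx h))
      obtain ⟨y0, hy0, hy0ne⟩ := Finset.exists_mem_ne hcard x
      set D := cfilter (fun y => G.Adj x y ∧ f y < f x) s with hDdef
      have hDc : Contractible G D := hf x hx ⟨y0, hy0, hstrict y0 hy0 hy0ne⟩
      have hDmem : ∀ y, y ∈ D ↔ y ∈ s ∧ G.Adj x y := by
        intro y
        rw [hDdef, mem_cfilter]
        exact ⟨fun ⟨h1, h2, _⟩ => ⟨h1, h2⟩,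
          fun ⟨h1, h2⟩ => ⟨h1, h2, hstrict y h1 h2.ne'⟩⟩
      have hDcard : D.card < s.card :=
        cfilter_card_lt hx (fun h => G.irrefl h.1)
      have hD1 : echar G D = 1 := ih D (by omega) hDc
      -- the graph with the maximal vertex removed is contractible
      have hec : Contractible G (s.erase x) := by
        rw [Contractible]
        rw [Finset.card_erase_of_mem hx]
        by_cases h1 : s.card - 1 = 1
        · exact Or.inl h1
        · refine Or.inr ⟨by omega, f, hinj.mono (by exact_mod_cast Finset.erase_subset x s),
            fun z hz hex => ?_⟩
          obtain ⟨y, hy, hyz⟩ := hex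
          have hzs : z ∈ s := Finset.mem_of_mem_erase hz
          have heq : cfilter (fun y => G.Adj z y ∧ f y < f z) (s.erase x)
              = cfilter (fun y => G.Adj z y ∧ f y < f z) s := by
            ext w
            rw [mem_cfilter, mem_cfilter, Finset.mem_erase]
            constructor
            · rintro ⟨⟨-, hws⟩, hp⟩; exact ⟨hws, hp⟩
            · rintro ⟨hws, hp⟩
              refine ⟨⟨?_, hws⟩, hp⟩
              rintro rfl
              have hzx : f z < f w := hstrict z hzs (Finset.mem_erase.mp hz).1
              exact absurd hp.2 (by linarith)
          rw [heq]
          exact hf z hzs ⟨y, Finset.mem_of_mem_erase hy, hyz⟩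
      have herase1 : echar G (s.erase x) = 1 := by
        refine ih (s.erase x) ?_ hec
        rw [Finset.card_erase_of_mem hx]; omega
      -- assemble
      have hDsub : D.card ≤ s.card - 1 := by
        have : D ⊆ s.erase x := fun y hy => Finset.mem_erase.mpr
          ⟨((hDmem y).mp hy).2.ne', ((hDmem y).mp hy).1⟩
        have := Finset.card_le_card this
        rw [Finset.card_erase_of_mem hx] at this
        exact this
      rw [echar_eq_sum G s (le_refl s.card)]
      have hsplit : ∀ k, (cliqueCount G s (k + 1) : ℤ)
          = (cliqueCount G (s.erase x) (k + 1) : ℤ) + (cliqueCount G D k : ℤ) := by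
        intro k
        rw [cliqueCount_split G hx hDmem k]
        push_cast; ring
      simp_rw [hsplit, mul_add, Finset.sum_add_distrib]
      have e1 : ∑ k ∈ Finset.range (s.card + 1),
          (-1 : ℤ) ^ k * (cliqueCount G (s.erase x) (k + 1) : ℤ) = 1 := by
        rw [← echar_eq_sum G (s.erase x) (le_trans (Finset.card_le_card
          (Finset.erase_subset x s)) (le_refl s.card)), herase1]
      have e2 : ∑ k ∈ Finset.range (s.card + 1),
          (-1 : ℤ) ^ k * (cliqueCount G D k : ℤ) = 0 := by
        rw [Finset.sum_range_succ']
        have hc1 : s.card = (s.card - 1) + 1 := by omega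
        have inner : ∑ k ∈ Finset.range s.card,
            (-1 : ℤ) ^ (k + 1) * (cliqueCount G D (k + 1) : ℤ)
            = - ∑ k ∈ Finset.range s.card, (-1 : ℤ) ^ k * (cliqueCount G D (k + 1) : ℤ) := by
          rw [← Finset.sum_neg_distrib]
          refine Finset.sum_congr rfl (fun k _ => by ring)
        rw [inner]
        have : ∑ k ∈ Finset.range s.card, (-1 : ℤ) ^ k * (cliqueCount G D (k + 1) : ℤ)
            = echar G D := by
          rw [echar_eq_sum G D (show D.card ≤ s.card - 1 from hDsub)]
          rw [← hc1]
        rw [this, hD1, cliqueCount_zero]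
        norm_num
      rw [e1, e2]
      norm_num


/-- Every finite simple graph that is contractible in itself has Euler
characteristic `1`. -/
theorem euler_of_contractible {V : Type*} [Fintype V] (G : SimpleGraph V)
    (h : Contractible G Finset.univ) :
    echar G Finset.univ = 1 := by
  exact echar_of_contractible G Finset.univ.card Finset.univ (le_refl _) h
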